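/- Let r ≥ 1 and f : [a,b] → ℝ be of r-bounded variation. Define Φ(u) = sup{ (v_f(x+u) - v_f(x))^{1/r} : x, x+u ∈ [a,b] }, where v_f(x) = V^r_{[a,x]}(f). Then Φ is subadditive on [0, b-a]. -/
import Mathlib


/-- The set of `r`-variation sums of `f` over partitions of `[a,b]`. -/
def rVarSums (r a b : ℝ) (f : ℝ → ℝ) : Set ℝ :=
  {s | ∃ (n : ℕ) (x : ℕ → ℝ), x 0 = a ∧ x n = b ∧ (∀ i, i < n → x i < x (i + 1)) ∧
    s = ∑ i ∈ Finset.range n, |f (x (i + 1)) - f (x i)| ^ r}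

lemma rVarSums_nonneg {r a b : ℝ} {f : ℝ → ℝ} {s : ℝ} (hs : s ∈ rVarSums r a b f) : 0 ≤ s := by
  obtain ⟨n, x, _, _, _, rfl⟩ := hs
  exact Finset.sum_nonneg fun i _ => Real.rpow_nonneg (abs_nonneg _) r

lemma rVarSums_nonempty {r a : ℝ} (f : ℝ → ℝ) {c : ℝ} (hc : a ≤ c) :
    (rVarSums r a c f).Nonempty := by
  rcases eq_or_lt_of_le hc with h | h
  · exact ⟨0, 0, fun _ => a, rfl, h ▸ rfl, by simp, by simp⟩
  · refine ⟨|f c - f a| ^ r, 1, fun i => if i = 0 then a else c, by simp, by simp, ?_, by simp⟩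
    intro i hi
    interval_cases i
    simpa using h

lemma rVarSums_extend {r a : ℝ} {f : ℝ → ℝ} {c d : ℝ} (hcd : c ≤ d) {s : ℝ}
    (hs : s ∈ rVarSums r a c f) : ∃ s' ∈ rVarSums r a d f, s ≤ s' := by
  rcases eq_or_lt_of_le hcd with rfl | h
  · exact ⟨s, hs, le_refl s⟩
  obtain ⟨n, x, hx0, hxn, hmono, rfl⟩ := hs
  refine ⟨_, ⟨n + 1, fun i => if i ≤ n then x i else d, by simp [hx0], by simp, ?_, rfl⟩, ?_⟩
  · intro i hi
    rcases lt_or_eq_of_le (Nat.lt_succ_iff.mp hi) with hi' | rfl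
    · simp only [if_pos (le_of_lt hi'), if_pos (Nat.succ_le_of_lt hi')]
      exact hmono i hi'
    · simp [hxn, h]
  · rw [Finset.sum_range_succ]
    have heq : ∀ i ∈ Finset.range n,
        |f (if i + 1 ≤ n then x (i + 1) else d) - f (if i ≤ n then x i else d)| ^ r
          = |f (x (i + 1)) - f (x i)| ^ r := by
      intro i hi
      rw [Finset.mem_range] at hi
      rw [if_pos (by omega), if_pos (by omega)]
    rw [Finset.sum_congr rfl heq]
    exact le_add_of_nonneg_right (Real.rpow_nonneg (abs_nonneg _) r)

lemma rVarSums_bdd {r a b : ℝ} {f : ℝ → ℝ} (hbv : BddAbove (rVarSums r a b f))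
    {c : ℝ} (hcb : c ≤ b) : BddAbove (rVarSums r a c f) := by
  obtain ⟨M, hM⟩ := hbv
  refine ⟨M, fun s hs => ?_⟩
  obtain ⟨s', hs', hss'⟩ := rVarSums_extend hcb hs
  exact hss'.trans (hM hs')

lemma V_mono {r a b : ℝ} {f : ℝ → ℝ} (hbv : BddAbove (rVarSums r a b f))
    {c d : ℝ} (hac : a ≤ c) (hcd : c ≤ d) (hdb : d ≤ b) :
    sSup (rVarSums r a c f) ≤ sSup (rVarSums r a d f) := by
  refine csSup_le (rVarSums_nonempty f hac) fun s hs => ?_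
  obtain ⟨s', hs', hss'⟩ := rVarSums_extend hcd hs
  exact hss'.trans (le_csSup (rVarSums_bdd hbv hdb) hs')

lemma add_rpow_le_helper {A B p : ℝ} (hA : 0 ≤ A) (hB : 0 ≤ B) (hp : 0 ≤ p) (hp1 : p ≤ 1) :
    (A + B) ^ p ≤ A ^ p + B ^ p := by
  lift A to NNReal using hA
  lift B to NNReal using hB
  rw [← NNReal.coe_add, ← NNReal.coe_rpow, ← NNReal.coe_rpow, ← NNReal.coe_rpow,
    ← NNReal.coe_add, NNReal.coe_le_coe]
  exact NNReal.rpow_add_le_add_rpow A B hp hp1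

theorem stmt_10 (r a b : ℝ) (hr : 1 ≤ r) (hab : a < b) (f : ℝ → ℝ)
    (hbv : BddAbove (rVarSums r a b f)) (Φ : ℝ → ℝ)
    (hΦ : ∀ u, Φ u = sSup {t | ∃ x : ℝ, a ≤ x ∧ x + u ≤ b ∧
      t = (sSup (rVarSums r a (x + u) f) - sSup (rVarSums r a x f)) ^ (1 / r)}) :
    ∀ u v : ℝ, 0 ≤ u → 0 ≤ v → u + v ≤ b - a → Φ (u + v) ≤ Φ u + Φ v := by
  intro u v hu hv huv
  have hr0 : (0 : ℝ) < r := lt_of_lt_of_le one_pos hr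
  have hir0 : (0 : ℝ) ≤ 1 / r := by positivity
  have hir1 : 1 / r ≤ 1 := by rw [div_le_one hr0]; exact hr
  have hVnn : ∀ c, 0 ≤ sSup (rVarSums r a c f) := fun c =>
    Real.sSup_nonneg fun s hs => rVarSums_nonneg hs
  have hbddS : ∀ w, 0 ≤ w → BddAbove {t | ∃ x : ℝ, a ≤ x ∧ x + w ≤ b ∧
      t = (sSup (rVarSums r a (x + w) f) - sSup (rVarSums r a x f)) ^ (1 / r)} := by
    intro w hw
    refine ⟨(sSup (rVarSums r a b f)) ^ (1 / r), ?_⟩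
    rintro t ⟨x, hax, hxb, rfl⟩
    have h2 : sSup (rVarSums r a (x + w) f) ≤ sSup (rVarSums r a b f) :=
      V_mono hbv (le_trans hax (le_add_of_nonneg_right hw)) hxb le_rfl
    have h3 : sSup (rVarSums r a x f) ≤ sSup (rVarSums r a (x + w) f) :=
      V_mono hbv hax (le_add_of_nonneg_right hw) hxb
    exact Real.rpow_le_rpow (by linarith) (by have := hVnn x; linarith) hir0
  rw [hΦ (u + v), hΦ u, hΦ v]
  refine csSup_le ⟨(sSup (rVarSums r a (a + (u + v)) f) - sSup (rVarSums r a a f)) ^ (1 / r),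
    ⟨a, le_rfl, by linarith, rfl⟩⟩ ?_
  rintro t ⟨x, hax, hxb, rfl⟩
  have hxuv : x + (u + v) = x + u + v := by ring
  rw [hxuv] at hxb ⊢
  have haxu : a ≤ x + u := by linarith
  have hxub : x + u ≤ b := by linarith
  have hA0 : 0 ≤ sSup (rVarSums r a (x + u) f) - sSup (rVarSums r a x f) :=
    sub_nonneg.mpr (V_mono hbv hax (by linarith) hxub)
  have hB0 : 0 ≤ sSup (rVarSums r a (x + u + v) f) - sSup (rVarSums r a (x + u) f) :=
    sub_nonneg.mpr (V_mono hbv haxu (by linarith) hxb)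
  have key : sSup (rVarSums r a (x + u + v) f) - sSup (rVarSums r a x f)
      = (sSup (rVarSums r a (x + u) f) - sSup (rVarSums r a x f))
        + (sSup (rVarSums r a (x + u + v) f) - sSup (rVarSums r a (x + u) f)) := by ring
  rw [key]
  refine le_trans (add_rpow_le_helper hA0 hB0 hir0 hir1) (add_le_add ?_ ?_)
  · exact le_csSup (hbddS u hu) ⟨x, hax, hxub, rfl⟩
  · exact le_csSup (hbddS v hv) ⟨x + u, haxu, hxb, rfl⟩
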